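/- Let H(x,y) = y²/2 + x²/2 + x⁴/4 and suppose λ₁ + λ₂x² + λ₃y² + λ₄x⁴ + λ₅y⁴ + λ₆x⁶ is such that the 1-form ω = (λ₁ + λ₂x² + λ₃y² + λ₄x⁴ + λ₅y⁴ + λ₆x⁶)·y dx has ∮_{H=h} ω = 0 for all h > 0. Then λ₁ = λ₅ = λ₆ = 0, λ₂ + 3λ₃ = 0 and λ₄ + 3λ₃ = 0; equivalently ω = λ₃·(−3x² + y² − 3x⁴)·y dx = λ₃·(−3xy·dH + d(xy³)), i.e. ω is relatively exact. -/

import Mathlib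

open Filter MeasureTheory intervalIntegral Set Topology

/-- For the global center `H = y²/2 + x²/2 + x⁴/4` and `h > 0`, the oval `{H = h}` is
`y² = 2h − x² − x⁴/2`, `|x| ≤ a h` where `a h` is its positive root. -/
noncomputable def a (h : ℝ) : ℝ := Real.sqrt (-1 + Real.sqrt (1 + 4*h))

/-- the positive branch `y(x, h)` of the oval `{H = h}` -/
noncomputable def yv (h x : ℝ) : ℝ := Real.sqrt (2*h - x^2 - x^4/2)

namespace CC

noncomputable def g (h u : ℝ) : ℝ := Real.sqrt (1 - u^2 - h*u^4)
noncomputable def gl (h v : ℝ) : ℝ := Real.sqrt (1 - v^4 - v^2/Real.sqrt h)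



lemma a_nonneg (h : ℝ) : 0 ≤ a h := Real.sqrt_nonneg _

lemma sqrt14_ge (h : ℝ) (hh : 0 < h) : 1 ≤ Real.sqrt (1+4*h) := by
  have := Real.sqrt_le_sqrt (show (1:ℝ) ≤ 1+4*h by linarith)
  simpa using this

lemma a_sq (h : ℝ) (hh : 0 < h) : (a h)^2 = -1 + Real.sqrt (1 + 4*h) := by
  have := sqrt14_ge h hh
  exact Real.sq_sqrt (by linarith)

lemma yv_eq_zero {h x : ℝ} (hh : 0 < h) (hx : a h ≤ |x|) : yv h x = 0 := by
  have hr : Real.sqrt (1+4*h) ^ 2 = 1 + 4*h := Real.sq_sqrt (by linarith)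
  have hr1 := sqrt14_ge h hh
  have hx2 : (a h)^2 ≤ x^2 := by
    calc (a h)^2 ≤ |x|^2 := pow_le_pow_left₀ (a_nonneg h) hx 2
    _ = x^2 := sq_abs x
  rw [a_sq h hh] at hx2
  unfold yv
  rw [Real.sqrt_eq_zero']
  nlinarith [mul_nonneg (by linarith : (0:ℝ) ≤ x^2 - (-1 + Real.sqrt (1+4*h)))
    (by nlinarith [sq_nonneg x] : (0:ℝ) ≤ x^2 + (-1 + Real.sqrt (1+4*h)))]

lemma a_le_small (h : ℝ) (hh : 0 < h) : a h ≤ Real.sqrt (2*h) := by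
  apply Real.sqrt_le_sqrt
  have : Real.sqrt (1+4*h) ≤ 1 + 2*h := by
    rw [Real.sqrt_le_left (by linarith)]; nlinarith
  linarith

lemma a_le_large (h : ℝ) (hh : 0 < h) : a h ≤ Real.sqrt (2*Real.sqrt h) := by
  apply Real.sqrt_le_sqrt
  have hs : Real.sqrt h ^ 2 = h := Real.sq_sqrt hh.le
  have hs0 : 0 ≤ Real.sqrt h := Real.sqrt_nonneg h
  have : Real.sqrt (1+4*h) ≤ 1 + 2*Real.sqrt h := by
    rw [Real.sqrt_le_left (by linarith)]; nlinarith
  linarith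

lemma reduce (h c : ℝ) (hh : 0 < h) (hc : a h ≤ c) (f : ℝ → ℝ) (hf : Continuous f)
    (hf0 : ∀ x, a h ≤ |x| → f x = 0) :
    (∫ x in (-(a h))..(a h), f x) = c • ∫ u in (-1:ℝ)..(1:ℝ), f (c*u) := by
  rw [intervalIntegral.smul_integral_comp_mul_left f c]
  have hca : -c ≤ -(a h) := by linarith
  have haa : -(a h) ≤ a h := by linarith [a_nonneg h]
  have hac : a h ≤ c := hc
  have e1 : (∫ x in (-c)..(-(a h)), f x) = 0 := by
    rw [intervalIntegral.integral_congr (g := fun _ => (0:ℝ)) ?_, intervalIntegral.integral_zero]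
    intro x hx
    rw [Set.uIcc_of_le hca] at hx
    exact hf0 x (le_trans (by linarith [hx.2]) (neg_le_abs x))
  have e2 : (∫ x in (a h)..c, f x) = 0 := by
    rw [intervalIntegral.integral_congr (g := fun _ => (0:ℝ)) ?_, intervalIntegral.integral_zero]
    intro x hx
    rw [Set.uIcc_of_le hac] at hx
    exact hf0 x (le_trans hx.1 (le_abs_self x))
  have A := intervalIntegral.integral_add_adjacent_intervals (μ := volume)
    (hf.intervalIntegrable (-c) (-(a h))) (hf.intervalIntegrable (-(a h)) (a h))
  have B := intervalIntegral.integral_add_adjacent_intervals (μ := volume)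
    (hf.intervalIntegrable (-c) (a h)) (hf.intervalIntegrable (a h) c)
  have : c * (-1 : ℝ) = -c := by ring
  rw [this, mul_one]
  linarith


lemma one_le_sqrt {h : ℝ} (hh : 1 ≤ h) : 1 ≤ Real.sqrt h := by
  have := Real.sqrt_le_sqrt hh
  simpa using this

lemma scale_zero {r : ℝ} {S F : ℝ → ℝ} (hS0 : (∫ u in (-1:ℝ)..1, S u) = 0)
    (hpt : ∀ u, F u = r * S u) : (∫ u in (-1:ℝ)..1, F u) = 0 := by
  rw [intervalIntegral.integral_congr (g := fun u => r * S u) (fun u _ => hpt u),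
    intervalIntegral.integral_const_mul, hS0, mul_zero]

lemma reduce' (h c d : ℝ) (hh : 0 < h) (hc : a h ≤ c) (f S : ℝ → ℝ) (hf : Continuous f)
    (hf0 : ∀ x, a h ≤ |x| → f x = 0) (hpt : ∀ u, f (c*u) = d * S u) :
    (∫ x in (-(a h))..(a h), f x) = (c*d) * ∫ u in (-1:ℝ)..1, S u := by
  rw [reduce h c hh hc f hf hf0]
  rw [intervalIntegral.integral_congr (g := fun u => d * S u) (fun u _ => hpt u),
    intervalIntegral.integral_const_mul, smul_eq_mul]
  ring


lemma yv_small (h u : ℝ) (hh : 0 < h) :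
    yv h (Real.sqrt (2*h) * u) = Real.sqrt (2*h) * g h u := by
  have h2 : Real.sqrt (2*h) ^ 2 = 2*h := Real.sq_sqrt (by linarith)
  unfold yv g
  rw [show 2*h - (Real.sqrt (2*h) * u)^2 - (Real.sqrt (2*h) * u)^4/2
      = (2*h) * (1 - u^2 - h*u^4) by
    linear_combination (-(u^2) - u^4*(Real.sqrt (2*h)^2 + 2*h)/2) * h2]
  exact Real.sqrt_mul (by linarith) _

private lemma quart_id (h v s c : ℝ) (hs0 : 0 < s) (hs : s^2 = h) (hc2 : c^2 = 2*s) :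
    2*h - (c * v)^2 - (c * v)^4/2 = (2*h) * (1 - v^4 - v^2/s) := by
  field_simp
  linear_combination (-2*v^2*s - v^4*s*(c^2+2*s)) * hc2 + (-(4*v^2+4*v^4*s)) * hs

lemma yv_large (h v : ℝ) (hh : 0 < h) :
    yv h (Real.sqrt (2*Real.sqrt h) * v) = Real.sqrt (2*h) * gl h v := by
  have hs0 : 0 < Real.sqrt h := Real.sqrt_pos.mpr hh
  have hs : Real.sqrt h ^ 2 = h := Real.sq_sqrt hh.le
  have hc2 : Real.sqrt (2*Real.sqrt h) ^ 2 = 2*Real.sqrt h := Real.sq_sqrt (by linarith)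
  unfold yv gl
  rw [quart_id h v (Real.sqrt h) (Real.sqrt (2*Real.sqrt h)) hs0 hs hc2]
  exact Real.sqrt_mul (by linarith) _



lemma hasDerivAt_phi {t : ℝ} (ht : 0 ≤ t) :
    HasDerivAt (fun s : ℝ => s * Real.sqrt s) (3/2 * Real.sqrt t) t := by
  rcases eq_or_lt_of_le ht with h0 | hpos
  · rw [← h0]
    rw [hasDerivAt_iff_tendsto_slope]
    have he : ∀ s : ℝ, s ≠ 0 → slope (fun s : ℝ => s * Real.sqrt s) 0 s = Real.sqrt s := by
      intro s hs
      simp [slope, hs, mul_comm, mul_div_assoc, div_self hs]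
    have : Filter.Tendsto Real.sqrt (nhdsWithin 0 {(0:ℝ)}ᶜ) (nhds 0) := by
      have h := Real.continuous_sqrt.tendsto 0
      rw [Real.sqrt_zero] at h
      exact h.mono_left nhdsWithin_le_nhds
    simp only [Real.sqrt_zero, mul_zero, show (3:ℝ)/2 * Real.sqrt 0 = 0 by simp]
    refine this.congr' ?_
    filter_upwards [self_mem_nhdsWithin] with s hs
    exact (he s hs).symm
  · have h1 := (hasDerivAt_id t).fun_mul (Real.hasDerivAt_sqrt (ne_of_gt hpos))
    have hsq : Real.sqrt t ^ 2 = t := Real.sq_sqrt ht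
    have hs0 : Real.sqrt t ≠ 0 := by positivity
    refine h1.congr_deriv ?_
    symm
    rw [id_eq]
    field_simp
    linear_combination hsq

lemma hasDerivAt_H1 (u : ℝ) (hu : u^2 ≤ 1) :
    HasDerivAt (fun u : ℝ => u * ((1-u^2) * Real.sqrt (1-u^2)))
      ((1-u^2) * Real.sqrt (1-u^2) - 3*(u^2*Real.sqrt (1-u^2))) u := by
  have hin : HasDerivAt (fun u : ℝ => 1 - u^2) (-(2*u)) u := by
    simpa using ((hasDerivAt_pow 2 u).const_sub 1)
  have hphi := (hasDerivAt_phi (t := 1-u^2) (by linarith)).comp u hin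
  have := (hasDerivAt_id u).fun_mul hphi
  refine this.congr_deriv ?_
  symm
  simp only [Function.comp_def, id_eq]
  ring

lemma hasDerivAt_H2 (v : ℝ) (hv : v^4 ≤ 1) :
    HasDerivAt (fun v : ℝ => v * ((1-v^4) * Real.sqrt (1-v^4)))
      ((1-v^4) * Real.sqrt (1-v^4) - 6*(v^4*Real.sqrt (1-v^4))) v := by
  have hin : HasDerivAt (fun v : ℝ => 1 - v^4) (-(4*v^3)) v := by
    simpa using ((hasDerivAt_pow 4 v).const_sub 1)
  have hphi := (hasDerivAt_phi (t := 1-v^4) (by linarith)).comp v hin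
  have := (hasDerivAt_id v).fun_mul hphi
  refine this.congr_deriv ?_
  symm
  simp only [Function.comp_def, id_eq]
  ring

lemma ftc1 : (∫ u in (-1:ℝ)..1, ((1-u^2) * Real.sqrt (1-u^2) - 3*(u^2*Real.sqrt (1-u^2)))) = 0 := by
  have := intervalIntegral.integral_eq_sub_of_hasDerivAt (a := (-1:ℝ)) (b := 1)
    (f := fun u : ℝ => u * ((1-u^2) * Real.sqrt (1-u^2)))
    (f' := fun u => ((1-u^2) * Real.sqrt (1-u^2) - 3*(u^2*Real.sqrt (1-u^2))))
    (fun u hu => by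
      rw [Set.uIcc_of_le (by norm_num : (-1:ℝ) ≤ 1)] at hu
      exact hasDerivAt_H1 u (by nlinarith [hu.1, hu.2]))
    (by apply Continuous.intervalIntegrable; continuity)
  rw [this]; norm_num

lemma ftc2 : (∫ v in (-1:ℝ)..1, ((1-v^4) * Real.sqrt (1-v^4) - 6*(v^4*Real.sqrt (1-v^4)))) = 0 := by
  have := intervalIntegral.integral_eq_sub_of_hasDerivAt (a := (-1:ℝ)) (b := 1)
    (f := fun v : ℝ => v * ((1-v^4) * Real.sqrt (1-v^4)))
    (f' := fun v => ((1-v^4) * Real.sqrt (1-v^4) - 6*(v^4*Real.sqrt (1-v^4))))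
    (fun v hv => by
      rw [Set.uIcc_of_le (by norm_num : (-1:ℝ) ≤ 1)] at hv
      exact hasDerivAt_H2 v (by
        have h2 : v^2 ≤ 1 := by nlinarith [hv.1, hv.2]
        nlinarith [sq_nonneg v]))
    (by apply Continuous.intervalIntegrable; continuity)
  rw [this]; norm_num



lemma pos_aux (f : ℝ → ℝ) (hf : Continuous f) (h0 : ∀ x ∈ Icc (-1:ℝ) 0, 0 ≤ f x)
    (h1 : ∀ x ∈ Ioo (0:ℝ) 1, 0 < f x) : 0 < ∫ x in (-1:ℝ)..1, f x := by
  have e := intervalIntegral.integral_add_adjacent_intervals (μ := volume)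
    (hf.intervalIntegrable (-1) 0) (hf.intervalIntegrable 0 1)
  have p1 : 0 ≤ ∫ x in (-1:ℝ)..0, f x :=
    intervalIntegral.integral_nonneg (by norm_num) h0
  have p2 : 0 < ∫ x in (0:ℝ)..1, f x :=
    intervalIntegral.intervalIntegral_pos_of_pos_on (hf.intervalIntegrable 0 1) h1 (by norm_num)
  linarith

lemma sq_le_one {x : ℝ} (h1 : -1 ≤ x) (h2 : x ≤ 1) : x^2 ≤ 1 := by nlinarith

lemma quart_le_one {x : ℝ} (h1 : -1 ≤ x) (h2 : x ≤ 1) : x^4 ≤ 1 := by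
  have := sq_le_one h1 h2; nlinarith [sq_nonneg x]

lemma posP : 0 < ∫ u in (-1:ℝ)..1, Real.sqrt (1-u^2) := by
  apply pos_aux _ (by fun_prop) (fun x _ => Real.sqrt_nonneg _)
  intro x hx
  exact Real.sqrt_pos.mpr (by nlinarith [hx.1, hx.2])

lemma posB : 0 < ∫ u in (-1:ℝ)..1, u^2 * Real.sqrt (1-u^2) := by
  apply pos_aux _ (by fun_prop) (fun x _ => by positivity)
  intro x hx
  have h2 : x^2 < 1 := pow_lt_one₀ hx.1.le hx.2 (by norm_num)
  exact mul_pos (pow_pos hx.1 2) (Real.sqrt_pos.mpr (by linarith))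

lemma posD : 0 < ∫ v in (-1:ℝ)..1, v^4 * Real.sqrt (1-v^4) := by
  apply pos_aux _ (by fun_prop) (fun x _ => by positivity)
  intro x hx
  have h4 : x^4 < 1 := pow_lt_one₀ hx.1.le hx.2 (by norm_num)
  exact mul_pos (pow_pos hx.1 4) (Real.sqrt_pos.mpr (by linarith))

lemma posF : 0 < ∫ v in (-1:ℝ)..1, v^6 * Real.sqrt (1-v^4) := by
  apply pos_aux _ (by fun_prop) (fun x _ => by positivity)
  intro x hx
  have h4 : x^4 < 1 := pow_lt_one₀ hx.1.le hx.2 (by norm_num)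
  exact mul_pos (pow_pos hx.1 6) (Real.sqrt_pos.mpr (by linarith))

lemma posE : 0 < ∫ v in (-1:ℝ)..1, (1-v^4)^2 * Real.sqrt (1-v^4) := by
  apply pos_aux _ (by fun_prop) (fun x _ => by positivity)
  intro x hx
  have h4 : x^4 < 1 := pow_lt_one₀ hx.1.le hx.2 (by norm_num)
  exact mul_pos (pow_pos (by linarith) 2) (Real.sqrt_pos.mpr (by linarith))



lemma g_nonneg (h u : ℝ) : 0 ≤ g h u := Real.sqrt_nonneg _
lemma gl_nonneg (h v : ℝ) : 0 ≤ gl h v := Real.sqrt_nonneg _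

lemma g_le_one {h : ℝ} (hh : 0 ≤ h) (u : ℝ) : g h u ≤ 1 := by
  unfold g; rw [Real.sqrt_le_one]; nlinarith [sq_nonneg u, sq_nonneg (u^2)]

lemma gl_le_one (h v : ℝ) : gl h v ≤ 1 := by
  unfold gl; rw [Real.sqrt_le_one]
  have h1 : 0 ≤ v^2 / Real.sqrt h := by positivity
  nlinarith [sq_nonneg (v^2)]

lemma cont_g (h : ℝ) : Continuous (fun u => g h u) := by
  unfold g; exact Real.continuous_sqrt.comp (by fun_prop)

lemma cont_gl (h : ℝ) : Continuous (fun v => gl h v) := by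
  unfold gl; exact Real.continuous_sqrt.comp (by fun_prop)

lemma cont_yvx (h : ℝ) : Continuous (fun x => Real.sqrt (2*h - x^2 - x^4/2)) :=
  Real.continuous_sqrt.comp (by fun_prop)

lemma abs_term {l q b : ℝ} (h0 : 0 ≤ q) (h1 : q ≤ b) : |l * q| ≤ |l| * b := by
  rw [abs_mul, abs_of_nonneg h0]
  exact mul_le_mul_of_nonneg_left h1 (abs_nonneg l)

lemma comb6 {gv c₁ c₂ c₃ c₄ c₅ c₆ b₁ b₂ b₃ b₄ b₅ b₆ : ℝ} (hg0 : 0 ≤ gv) (hg1 : gv ≤ 1)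
    (h₁ : |c₁| ≤ b₁) (h₂ : |c₂| ≤ b₂) (h₃ : |c₃| ≤ b₃) (h₄ : |c₄| ≤ b₄)
    (h₅ : |c₅| ≤ b₅) (h₆ : |c₆| ≤ b₆) :
    |(c₁+c₂+c₃+c₄+c₅+c₆)*gv| ≤ b₁+b₂+b₃+b₄+b₅+b₆ := by
  have habs : |gv| ≤ 1 := by rwa [abs_of_nonneg hg0]
  calc |(c₁+c₂+c₃+c₄+c₅+c₆)*gv| = |c₁+c₂+c₃+c₄+c₅+c₆| * |gv| := abs_mul _ _
    _ ≤ |c₁+c₂+c₃+c₄+c₅+c₆| * 1 := mul_le_mul_of_nonneg_left habs (abs_nonneg _)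
    _ = |c₁+c₂+c₃+c₄+c₅+c₆| := mul_one _
    _ ≤ |c₁|+|c₂|+|c₃|+|c₄|+|c₅|+|c₆| := by
        calc |c₁+c₂+c₃+c₄+c₅+c₆| ≤ |c₁+c₂+c₃+c₄+c₅|+|c₆| := abs_add_le _ _
          _ ≤ |c₁+c₂+c₃+c₄|+|c₅|+|c₆| := by linarith [abs_add_le (c₁+c₂+c₃+c₄) c₅]
          _ ≤ |c₁+c₂+c₃|+|c₄|+|c₅|+|c₆| := by linarith [abs_add_le (c₁+c₂+c₃) c₄]
          _ ≤ |c₁+c₂|+|c₃|+|c₄|+|c₅|+|c₆| := by linarith [abs_add_le (c₁+c₂) c₃]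
          _ ≤ |c₁|+|c₂|+|c₃|+|c₄|+|c₅|+|c₆| := by linarith [abs_add_le c₁ c₂]
    _ ≤ b₁+b₂+b₃+b₄+b₅+b₆ := by linarith

lemma comb5 {gv c₂ c₃ c₄ c₅ c₆ b₂ b₃ b₄ b₅ b₆ : ℝ} (hg0 : 0 ≤ gv) (hg1 : gv ≤ 1)
    (h₂ : |c₂| ≤ b₂) (h₃ : |c₃| ≤ b₃) (h₄ : |c₄| ≤ b₄)
    (h₅ : |c₅| ≤ b₅) (h₆ : |c₆| ≤ b₆) :
    |(c₂+c₃+c₄+c₅+c₆)*gv| ≤ b₂+b₃+b₄+b₅+b₆ := by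
  have := comb6 (c₁ := 0) (b₁ := 0) hg0 hg1 (by simp) h₂ h₃ h₄ h₅ h₆
  simpa using this

lemma comb3 {gv c₂ c₃ c₄ b₂ b₃ b₄ : ℝ} (hg0 : 0 ≤ gv) (hg1 : gv ≤ 1)
    (h₂ : |c₂| ≤ b₂) (h₃ : |c₃| ≤ b₃) (h₄ : |c₄| ≤ b₄) :
    |(c₂+c₃+c₄)*gv| ≤ b₂+b₃+b₄ := by
  have := comb6 (c₁ := 0) (b₁ := 0) (c₅ := 0) (b₅ := 0) (c₆ := 0) (b₆ := 0)
    hg0 hg1 (by simp) h₂ h₃ h₄ (by simp) (by simp)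
  simpa using this

lemma comb4 {gv c₂ c₃ c₄ c₆ b₂ b₃ b₄ b₆ : ℝ} (hg0 : 0 ≤ gv) (hg1 : gv ≤ 1)
    (h₂ : |c₂| ≤ b₂) (h₃ : |c₃| ≤ b₃) (h₄ : |c₄| ≤ b₄) (h₆ : |c₆| ≤ b₆) :
    |(c₂+c₃+c₄+c₆)*gv| ≤ b₂+b₃+b₄+b₆ := by
  have := comb6 (c₁ := 0) (b₁ := 0) (c₅ := 0) (b₅ := 0)
    hg0 hg1 (by simp) h₂ h₃ h₄ (by simp) h₆
  simpa using this

lemma tendsto_inv_sqrt : Tendsto (fun h : ℝ => (Real.sqrt h)⁻¹) atTop (𝓝 0) := by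
  have h1 : Tendsto (fun h : ℝ => Real.sqrt h⁻¹) atTop (𝓝 0) := by
    have h2 := (Real.continuous_sqrt.tendsto 0).comp tendsto_inv_atTop_zero
    rw [Real.sqrt_zero] at h2
    exact h2
  refine h1.congr (fun h => ?_)
  rw [Real.sqrt_inv]

lemma tendsto_of_bound (c : ℝ) (f : ℝ → ℝ)
    (hb : ∀ h : ℝ, 1 ≤ h → |f h| ≤ c / Real.sqrt h) : Tendsto f atTop (𝓝 0) := by
  refine squeeze_zero_norm' (a := fun h => c / Real.sqrt h) ?_ ?_
  · filter_upwards [eventually_ge_atTop (1:ℝ)] with h hh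
    exact hb h hh
  · have := tendsto_inv_sqrt.const_mul c
    simpa [div_eq_mul_inv] using this

lemma tendsto_gl (v : ℝ) : Tendsto (fun h => gl h v) atTop (𝓝 (Real.sqrt (1-v^4))) := by
  have hin : Tendsto (fun h : ℝ => 1 - v^4 - v^2/Real.sqrt h) atTop (𝓝 (1-v^4)) := by
    have h2 : Tendsto (fun h : ℝ => v^2/Real.sqrt h) atTop (𝓝 0) := by
      have := tendsto_inv_sqrt.const_mul (v^2)
      simpa [div_eq_mul_inv] using this
    have := (tendsto_const_nhds (x := 1 - v^4) (f := atTop (α := ℝ))).sub h2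
    simpa using this
  have := (Real.continuous_sqrt.tendsto (1-v^4)).comp hin
  simpa [Function.comp_def, gl] using this

lemma lim_int (F : ℝ → ℝ → ℝ) (f : ℝ → ℝ) (lf : Filter ℝ) [lf.IsCountablyGenerated]
    (C : ℝ) (hmeas : ∀ᶠ h in lf, Continuous (F h))
    (hbd : ∀ᶠ h in lf, ∀ u ∈ Set.Ioc (-1:ℝ) 1, |F h u| ≤ C)
    (hlim : ∀ u ∈ Set.Ioc (-1:ℝ) 1, Tendsto (fun h => F h u) lf (𝓝 (f u))) :
    Tendsto (fun h => ∫ u in (-1:ℝ)..1, F h u) lf (𝓝 (∫ u in (-1:ℝ)..1, f u)) := by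
  have huIoc : Set.uIoc (-1:ℝ) 1 = Set.Ioc (-1:ℝ) 1 := Set.uIoc_of_le (by norm_num)
  apply intervalIntegral.tendsto_integral_filter_of_dominated_convergence (bound := fun _ => C)
  · exact hmeas.mono (fun h hc => hc.aestronglyMeasurable)
  · refine hbd.mono (fun h hb => MeasureTheory.ae_of_all _ (fun u hu => ?_))
    rw [huIoc] at hu
    exact hb u hu
  · exact intervalIntegrable_const
  · refine MeasureTheory.ae_of_all _ (fun u hu => ?_)
    rw [huIoc] at hu
    exact hlim u hu

lemma conclude {lf : Filter ℝ} [lf.NeBot] {F : ℝ → ℝ → ℝ} {L : ℝ}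
    (hvanish : ∀ᶠ h in lf, (∫ u in (-1:ℝ)..1, F h u) = 0)
    (htend : Tendsto (fun h => ∫ u in (-1:ℝ)..1, F h u) lf (𝓝 L)) : L = 0 := by
  have h0 : Tendsto (fun h => ∫ u in (-1:ℝ)..1, F h u) lf (𝓝 0) := by
    rw [tendsto_congr' (hvanish.mono (fun h hh => hh))]
    exact tendsto_const_nhds
  exact tendsto_nhds_unique htend h0


end CC

set_option maxHeartbeats 3000000 in
/-- If `ω = (λ₁ + λ₂x² + λ₃y² + λ₄x⁴ + λ₅y⁴ + λ₆x⁶)·y dx` satisfies `∮_{H=h} ω = 0`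
for all `h > 0`, then `λ₁ = λ₅ = λ₆ = 0`, `λ₂ + 3λ₃ = 0` and `λ₄ + 3λ₃ = 0`
(so that `ω = λ₃(−3x² + y² − 3x⁴) y dx` is relatively exact). -/
theorem center_conditions (l₁ l₂ l₃ l₄ l₅ l₆ : ℝ)
    (hvan : ∀ h : ℝ, 0 < h →
      (∫ x in (-(a h))..(a h),
        (l₁ + l₂*x^2 + l₃*(yv h x)^2 + l₄*x^4 + l₅*(yv h x)^4 + l₆*x^6) * yv h x) = 0) :
    l₁ = 0 ∧ l₅ = 0 ∧ l₆ = 0 ∧ l₂ + 3*l₃ = 0 ∧ l₄ + 3*l₃ = 0 := by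
  have hcont : ∀ h : ℝ, Continuous (fun x =>
      (l₁ + l₂*x^2 + l₃*(yv h x)^2 + l₄*x^4 + l₅*(yv h x)^4 + l₆*x^6) * yv h x) := by
    intro h
    unfold yv
    fun_prop
  have hzero : ∀ h : ℝ, 0 < h → ∀ x : ℝ, a h ≤ |x| →
      (l₁ + l₂*x^2 + l₃*(yv h x)^2 + l₄*x^4 + l₅*(yv h x)^4 + l₆*x^6) * yv h x = 0 := by
    intro h hh x hx
    rw [CC.yv_eq_zero hh hx, mul_zero]
  -- small-h scaled vanishing
  have hS : ∀ h : ℝ, 0 < h → (∫ u in (-1:ℝ)..1,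
      (l₁ + l₂*(2*h*u^2) + l₃*(2*h*(CC.g h u)^2) + l₄*(4*h^2*u^4) + l₅*(4*h^2*(CC.g h u)^4)
        + l₆*(8*h^3*u^6)) * CC.g h u) = 0 := by
    intro h hh
    have h2h : (0:ℝ) < 2*h := by linarith
    have hc2 : Real.sqrt (2*h) ^ 2 = 2*h := Real.sq_sqrt h2h.le
    have hcpos : 0 < Real.sqrt (2*h) := Real.sqrt_pos.mpr h2h
    have hpt : ∀ u : ℝ, (l₁ + l₂*(Real.sqrt (2*h)*u)^2 + l₃*(yv h (Real.sqrt (2*h)*u))^2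
        + l₄*(Real.sqrt (2*h)*u)^4 + l₅*(yv h (Real.sqrt (2*h)*u))^4 + l₆*(Real.sqrt (2*h)*u)^6)
        * yv h (Real.sqrt (2*h)*u)
        = Real.sqrt (2*h) * ((l₁ + l₂*(2*h*u^2) + l₃*(2*h*(CC.g h u)^2) + l₄*(4*h^2*u^4)
          + l₅*(4*h^2*(CC.g h u)^4) + l₆*(8*h^3*u^6)) * CC.g h u) := by
      intro u
      rw [CC.yv_small h u hh]
      set c := Real.sqrt (2*h) with hcdef
      set gg := CC.g h u with hgdef
      linear_combination (c*gg*(l₂*u^2 + l₃*gg^2 + (l₄*u^4+l₅*gg^4)*(c^2+2*h)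
        + l₆*u^6*(c^4+2*h*c^2+4*h^2))) * hc2
    have h1 : (∫ x in (-(a h))..(a h),
        (l₁ + l₂*x^2 + l₃*(yv h x)^2 + l₄*x^4 + l₅*(yv h x)^4 + l₆*x^6) * yv h x)
        = (Real.sqrt (2*h) * Real.sqrt (2*h)) * ∫ u in (-1:ℝ)..1,
          (l₁ + l₂*(2*h*u^2) + l₃*(2*h*(CC.g h u)^2) + l₄*(4*h^2*u^4)
            + l₅*(4*h^2*(CC.g h u)^4) + l₆*(8*h^3*u^6)) * CC.g h u :=
      CC.reduce' h (Real.sqrt (2*h)) (Real.sqrt (2*h)) hh (CC.a_le_small h hh) _ _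
        (hcont h) (hzero h hh) hpt
    rw [hvan h hh] at h1
    have hne : Real.sqrt (2*h) * Real.sqrt (2*h) ≠ 0 := by positivity
    exact ((mul_eq_zero.mp h1.symm).resolve_left hne)
  -- large-h scaled vanishing
  have hT : ∀ h : ℝ, 0 < h → (∫ v in (-1:ℝ)..1,
      (l₁ + l₂*(2*Real.sqrt h*v^2) + l₃*(2*h*(CC.gl h v)^2) + l₄*(4*h*v^4)
        + l₅*(4*h^2*(CC.gl h v)^4) + l₆*(8*h*Real.sqrt h*v^6)) * CC.gl h v) = 0 := by
    intro h hh
    have hs0 : 0 < Real.sqrt h := Real.sqrt_pos.mpr hh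
    have hs : Real.sqrt h ^ 2 = h := Real.sq_sqrt hh.le
    have hc2 : Real.sqrt (2*Real.sqrt h) ^ 2 = 2*Real.sqrt h := Real.sq_sqrt (by linarith)
    have hd2 : Real.sqrt (2*h) ^ 2 = 2*h := Real.sq_sqrt (by linarith)
    have hcpos : 0 < Real.sqrt (2*Real.sqrt h) := Real.sqrt_pos.mpr (by linarith)
    have hdpos : 0 < Real.sqrt (2*h) := Real.sqrt_pos.mpr (by linarith)
    have hpt : ∀ v : ℝ, (l₁ + l₂*(Real.sqrt (2*Real.sqrt h)*v)^2
        + l₃*(yv h (Real.sqrt (2*Real.sqrt h)*v))^2 + l₄*(Real.sqrt (2*Real.sqrt h)*v)^4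
        + l₅*(yv h (Real.sqrt (2*Real.sqrt h)*v))^4 + l₆*(Real.sqrt (2*Real.sqrt h)*v)^6)
        * yv h (Real.sqrt (2*Real.sqrt h)*v)
        = Real.sqrt (2*h) * ((l₁ + l₂*(2*Real.sqrt h*v^2) + l₃*(2*h*(CC.gl h v)^2)
          + l₄*(4*h*v^4) + l₅*(4*h^2*(CC.gl h v)^4) + l₆*(8*h*Real.sqrt h*v^6)) * CC.gl h v) := by
      intro v
      rw [CC.yv_large h v hh]
      set s := Real.sqrt h with hsdef
      set c := Real.sqrt (2*s) with hcdef
      set d := Real.sqrt (2*h) with hddef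
      set gg := CC.gl h v with hgdef
      linear_combination (d*gg*(l₂*v^2 + l₄*v^4*(c^2+2*s) + l₆*v^6*(c^4+2*s*c^2+4*s^2))) * hc2
        + (d*gg*(l₃*gg^2 + l₅*gg^4*(d^2+2*h))) * hd2
        + (d*gg*(4*l₄*v^4 + 8*s*l₆*v^6)) * hs
    have h1 : (∫ x in (-(a h))..(a h),
        (l₁ + l₂*x^2 + l₃*(yv h x)^2 + l₄*x^4 + l₅*(yv h x)^4 + l₆*x^6) * yv h x)
        = (Real.sqrt (2*Real.sqrt h) * Real.sqrt (2*h)) * ∫ v in (-1:ℝ)..1,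
          (l₁ + l₂*(2*Real.sqrt h*v^2) + l₃*(2*h*(CC.gl h v)^2) + l₄*(4*h*v^4)
            + l₅*(4*h^2*(CC.gl h v)^4) + l₆*(8*h*Real.sqrt h*v^6)) * CC.gl h v :=
      CC.reduce' h (Real.sqrt (2*Real.sqrt h)) (Real.sqrt (2*h)) hh (CC.a_le_large h hh) _ _
        (hcont h) (hzero h hh) hpt
    rw [hvan h hh] at h1
    have hne : Real.sqrt (2*Real.sqrt h) * Real.sqrt (2*h) ≠ 0 := by positivity
    exact ((mul_eq_zero.mp h1.symm).resolve_left hne)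
  -- Step 1 : l₁ = 0 from h → 0⁺
  have hl₁ : l₁ = 0 := by
    have hlim : Filter.Tendsto (fun h => ∫ u in (-1:ℝ)..1,
        (l₁ + l₂*(2*h*u^2) + l₃*(2*h*(CC.g h u)^2) + l₄*(4*h^2*u^4) + l₅*(4*h^2*(CC.g h u)^4)
          + l₆*(8*h^3*u^6)) * CC.g h u) (𝓝[>] (0:ℝ))
        (𝓝 (∫ u in (-1:ℝ)..1, l₁ * Real.sqrt (1-u^2))) := by
      apply CC.lim_int _ _ _ (|l₁| + |l₂| * 2 + |l₃| * 2 + |l₄| * 4 + |l₅| * 4 + |l₆| * 8)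
      · refine Filter.Eventually.of_forall (fun h => ?_)
        unfold CC.g
        fun_prop
      · refine Filter.eventually_of_mem (Ioc_mem_nhdsGT_of_mem (by norm_num :
          (0:ℝ) ∈ Set.Ico (0:ℝ) 1)) (fun h hh => ?_)
        intro u hu
        obtain ⟨hh0, hh1⟩ := hh
        have hu2 : u^2 ≤ 1 := CC.sq_le_one hu.1.le hu.2
        have hu4 : u^4 ≤ 1 := by nlinarith [sq_nonneg u, sq_nonneg (u^2)]
        have hu6 : u^6 ≤ 1 := by nlinarith [sq_nonneg u, sq_nonneg (u^2), sq_nonneg (u^3)]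
        have hg0 := CC.g_nonneg h u
        have hg1 := CC.g_le_one hh0.le u
        have hg2 : (CC.g h u)^2 ≤ 1 := by nlinarith
        have hg4 : (CC.g h u)^4 ≤ 1 := by nlinarith
        refine CC.comb6 hg0 hg1 (le_refl |l₁|) ?_ ?_ ?_ ?_ ?_
        · exact CC.abs_term (by positivity) (by nlinarith [mul_le_mul hh1 hu2 (sq_nonneg u) zero_le_one])
        · exact CC.abs_term (by positivity) (by nlinarith [mul_le_mul hh1 hg2 (by positivity) zero_le_one])
        · exact CC.abs_term (by positivity) (by nlinarith [mul_le_mul (pow_le_one₀ hh0.le hh1 : h^2 ≤ 1) hu4 (by positivity) zero_le_one])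
        · exact CC.abs_term (by positivity) (by nlinarith [mul_le_mul (pow_le_one₀ hh0.le hh1 : h^2 ≤ 1) hg4 (by positivity) zero_le_one])
        · exact CC.abs_term (by positivity) (by nlinarith [mul_le_mul (pow_le_one₀ hh0.le hh1 : h^3 ≤ 1) hu6 (by positivity) zero_le_one])
      · intro u hu
        have hc : Continuous (fun h => (l₁ + l₂*(2*h*u^2) + l₃*(2*h*(CC.g h u)^2)
            + l₄*(4*h^2*u^4) + l₅*(4*h^2*(CC.g h u)^4) + l₆*(8*h^3*u^6)) * CC.g h u) := by
          unfold CC.g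
          fun_prop
        have hts := (hc.tendsto 0).mono_left (nhdsWithin_le_nhds (s := Set.Ioi (0:ℝ)))
        convert hts using 2
        unfold CC.g
        norm_num
    have hvanish : ∀ᶠ h in 𝓝[>] (0:ℝ), (∫ u in (-1:ℝ)..1,
        (l₁ + l₂*(2*h*u^2) + l₃*(2*h*(CC.g h u)^2) + l₄*(4*h^2*u^4) + l₅*(4*h^2*(CC.g h u)^4)
          + l₆*(8*h^3*u^6)) * CC.g h u) = 0 :=
      Filter.eventually_of_mem self_mem_nhdsWithin (fun h hh => hS h hh)
    have e : (∫ u in (-1:ℝ)..1, l₁ * Real.sqrt (1-u^2)) = 0 := CC.conclude hvanish hlim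
    rw [intervalIntegral.integral_const_mul] at e
    exact (mul_eq_zero.mp e).resolve_right (ne_of_gt CC.posP)
  subst hl₁
  -- Step 2 : l₅ = 0 from h → ∞
  have hl₅ : l₅ = 0 := by
    have hvanish : ∀ᶠ h in (atTop : Filter ℝ), (∫ v in (-1:ℝ)..1,
        (l₂*(Real.sqrt h*v^2/(2*h^2)) + l₃*((CC.gl h v)^2/(2*h)) + l₄*(v^4/h)
          + l₅*((CC.gl h v)^4) + l₆*(2*Real.sqrt h*v^6/h)) * CC.gl h v) = 0 := by
      filter_upwards [eventually_gt_atTop (0:ℝ)] with h hh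
      exact CC.scale_zero (r := (4*h^2)⁻¹) (hT h hh)
        (fun v => by field_simp; ring)
    have hlim : Filter.Tendsto (fun h => ∫ v in (-1:ℝ)..1,
        (l₂*(Real.sqrt h*v^2/(2*h^2)) + l₃*((CC.gl h v)^2/(2*h)) + l₄*(v^4/h)
          + l₅*((CC.gl h v)^4) + l₆*(2*Real.sqrt h*v^6/h)) * CC.gl h v) (atTop : Filter ℝ)
        (𝓝 (∫ v in (-1:ℝ)..1, l₅*((1-v^4)^2*Real.sqrt (1-v^4)))) := by
      apply CC.lim_int _ _ _ (|l₂| * 1 + |l₃| * 1 + |l₄| * 1 + |l₅| * 1 + |l₆| * 2)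
      · refine Filter.Eventually.of_forall (fun h => ?_)
        unfold CC.gl
        fun_prop
      · filter_upwards [eventually_ge_atTop (1:ℝ)] with h hh1
        intro v hv
        have hh0 : (0:ℝ) < h := by linarith
        have hs1 : 1 ≤ Real.sqrt h := CC.one_le_sqrt hh1
        have hs : Real.sqrt h ^ 2 = h := Real.sq_sqrt hh0.le
        have hsh : Real.sqrt h ≤ h := by nlinarith
        have hv2 : v^2 ≤ 1 := CC.sq_le_one hv.1.le hv.2
        have hv4 : v^4 ≤ 1 := by nlinarith [sq_nonneg v, sq_nonneg (v^2)]
        have hv6 : v^6 ≤ 1 := by nlinarith [sq_nonneg v, sq_nonneg (v^2), sq_nonneg (v^3)]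
        have hg0 := CC.gl_nonneg h v
        have hg1 := CC.gl_le_one h v
        have hg2 : (CC.gl h v)^2 ≤ 1 := by nlinarith
        have hg4 : (CC.gl h v)^4 ≤ 1 := by nlinarith
        refine CC.comb5 hg0 hg1 ?_ ?_ ?_ ?_ ?_
        · refine CC.abs_term (by positivity) ?_
          rw [div_le_one (by positivity)]
          nlinarith [mul_le_mul_of_nonneg_left hv2 (Real.sqrt_nonneg h)]
        · refine CC.abs_term (by positivity) ?_
          rw [div_le_one (by positivity)]
          nlinarith
        · refine CC.abs_term (by positivity) ?_
          rw [div_le_one (by positivity)]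
          nlinarith
        · exact CC.abs_term (by positivity) hg4
        · refine CC.abs_term (by positivity) ?_
          rw [div_le_iff₀ (by positivity : (0:ℝ) < h)]
          nlinarith [mul_le_mul_of_nonneg_left hv6 (Real.sqrt_nonneg h)]
      · intro v hv
        have hv2 : v^2 ≤ 1 := CC.sq_le_one hv.1.le hv.2
        have hv4 : v^4 ≤ 1 := by nlinarith [sq_nonneg v, sq_nonneg (v^2)]
        have hv6 : v^6 ≤ 1 := by nlinarith [sq_nonneg v, sq_nonneg (v^2), sq_nonneg (v^3)]
        have hs14 : (0:ℝ) ≤ 1 - v^4 := by linarith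
        have t2 : Filter.Tendsto (fun h => l₂*(Real.sqrt h*v^2/(2*h^2))) atTop (𝓝 0) := by
          apply CC.tendsto_of_bound |l₂|
          intro h hh1
          have hh0 : (0:ℝ) < h := by linarith
          have hs1 : 1 ≤ Real.sqrt h := CC.one_le_sqrt hh1
          have hs : Real.sqrt h ^ 2 = h := Real.sq_sqrt hh0.le
          have hq0 : 0 ≤ Real.sqrt h*v^2/(2*h^2) := by positivity
          rw [abs_mul, abs_of_nonneg hq0]
          have hq : Real.sqrt h*v^2/(2*h^2) ≤ 1/Real.sqrt h := by
            rw [div_le_div_iff₀ (by positivity) (by positivity)]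
            nlinarith [mul_le_mul_of_nonneg_left hv2 (Real.sqrt_nonneg h), sq_nonneg (Real.sqrt h)]
          calc |l₂| * (Real.sqrt h*v^2/(2*h^2)) ≤ |l₂| * (1/Real.sqrt h) :=
              mul_le_mul_of_nonneg_left hq (abs_nonneg _)
            _ = |l₂|/Real.sqrt h := by ring
        have t3 : Filter.Tendsto (fun h => l₃*((CC.gl h v)^2/(2*h))) atTop (𝓝 0) := by
          apply CC.tendsto_of_bound |l₃|
          intro h hh1
          have hh0 : (0:ℝ) < h := by linarith
          have hs1 : 1 ≤ Real.sqrt h := CC.one_le_sqrt hh1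
          have hs : Real.sqrt h ^ 2 = h := Real.sq_sqrt hh0.le
          have hg0 := CC.gl_nonneg h v
          have hg1 := CC.gl_le_one h v
          have hg2 : (CC.gl h v)^2 ≤ 1 := by nlinarith
          have hq0 : 0 ≤ (CC.gl h v)^2/(2*h) := by positivity
          rw [abs_mul, abs_of_nonneg hq0]
          have hq : (CC.gl h v)^2/(2*h) ≤ 1/Real.sqrt h := by
            rw [div_le_div_iff₀ (by positivity) (by positivity)]
            nlinarith
          calc |l₃| * ((CC.gl h v)^2/(2*h)) ≤ |l₃| * (1/Real.sqrt h) :=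
              mul_le_mul_of_nonneg_left hq (abs_nonneg _)
            _ = |l₃|/Real.sqrt h := by ring
        have t4 : Filter.Tendsto (fun h => l₄*(v^4/h)) atTop (𝓝 0) := by
          apply CC.tendsto_of_bound |l₄|
          intro h hh1
          have hh0 : (0:ℝ) < h := by linarith
          have hs1 : 1 ≤ Real.sqrt h := CC.one_le_sqrt hh1
          have hs : Real.sqrt h ^ 2 = h := Real.sq_sqrt hh0.le
          have hq0 : 0 ≤ v^4/h := by positivity
          rw [abs_mul, abs_of_nonneg hq0]
          have hq : v^4/h ≤ 1/Real.sqrt h := by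
            rw [div_le_div_iff₀ (by positivity) (by positivity)]
            nlinarith
          calc |l₄| * (v^4/h) ≤ |l₄| * (1/Real.sqrt h) :=
              mul_le_mul_of_nonneg_left hq (abs_nonneg _)
            _ = |l₄|/Real.sqrt h := by ring
        have t5 : Filter.Tendsto (fun h => l₅*((CC.gl h v)^4)) atTop (𝓝 (l₅*(1-v^4)^2)) := by
          have h4 := ((CC.tendsto_gl v).pow 4).const_mul l₅
          have hval : (Real.sqrt (1-v^4))^4 = (1-v^4)^2 := by
            rw [show (Real.sqrt (1-v^4))^4 = ((Real.sqrt (1-v^4))^2)^2 by ring,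
              Real.sq_sqrt hs14]
          rw [hval] at h4
          exact h4
        have t6 : Filter.Tendsto (fun h => l₆*(2*Real.sqrt h*v^6/h)) atTop (𝓝 0) := by
          apply CC.tendsto_of_bound (|l₆| * 2)
          intro h hh1
          have hh0 : (0:ℝ) < h := by linarith
          have hs1 : 1 ≤ Real.sqrt h := CC.one_le_sqrt hh1
          have hs : Real.sqrt h ^ 2 = h := Real.sq_sqrt hh0.le
          have hq0 : 0 ≤ 2*Real.sqrt h*v^6/h := by positivity
          rw [abs_mul, abs_of_nonneg hq0]
          have hq : 2*Real.sqrt h*v^6/h ≤ 2/Real.sqrt h := by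
            rw [div_le_div_iff₀ (by positivity) (by positivity)]
            nlinarith [mul_le_mul_of_nonneg_left hv6 (Real.sqrt_nonneg h)]
          calc |l₆| * (2*Real.sqrt h*v^6/h) ≤ |l₆| * (2/Real.sqrt h) :=
              mul_le_mul_of_nonneg_left hq (abs_nonneg _)
            _ = |l₆| * 2/Real.sqrt h := by ring
        have prod := ((((t2.add t3).add t4).add t5).add t6).mul (CC.tendsto_gl v)
        rw [show l₅*((1-v^4)^2*Real.sqrt (1-v^4))
          = (0+0+0+l₅*(1-v^4)^2+0)*Real.sqrt (1-v^4) by ring]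
        exact prod
    have e : (∫ v in (-1:ℝ)..1, l₅*((1-v^4)^2*Real.sqrt (1-v^4))) = 0 :=
      CC.conclude hvanish hlim
    rw [intervalIntegral.integral_const_mul] at e
    exact (mul_eq_zero.mp e).resolve_right (ne_of_gt CC.posE)
  subst hl₅
  -- Step 3 : l₆ = 0
  have hl₆ : l₆ = 0 := by
    have hvanish : ∀ᶠ h in (atTop : Filter ℝ), (∫ v in (-1:ℝ)..1,
        (l₂*(2*v^2/h) + l₃*(2*(CC.gl h v)^2/Real.sqrt h) + l₄*(4*v^4/Real.sqrt h)
          + l₆*(8*v^6)) * CC.gl h v) = 0 := by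
      filter_upwards [eventually_gt_atTop (0:ℝ)] with h hh
      have hsne : Real.sqrt h ≠ 0 := (Real.sqrt_pos.mpr hh).ne'
      exact CC.scale_zero (r := (h*Real.sqrt h)⁻¹) (hT h hh)
        (fun v => by field_simp; ring)
    have hlim : Filter.Tendsto (fun h => ∫ v in (-1:ℝ)..1,
        (l₂*(2*v^2/h) + l₃*(2*(CC.gl h v)^2/Real.sqrt h) + l₄*(4*v^4/Real.sqrt h)
          + l₆*(8*v^6)) * CC.gl h v) (atTop : Filter ℝ)
        (𝓝 (∫ v in (-1:ℝ)..1, l₆*(8*(v^6*Real.sqrt (1-v^4))))) := by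
      apply CC.lim_int _ _ _ (|l₂| * 2 + |l₃| * 2 + |l₄| * 4 + |l₆| * 8)
      · refine Filter.Eventually.of_forall (fun h => ?_)
        unfold CC.gl
        fun_prop
      · filter_upwards [eventually_ge_atTop (1:ℝ)] with h hh1
        intro v hv
        have hh0 : (0:ℝ) < h := by linarith
        have hs1 : 1 ≤ Real.sqrt h := CC.one_le_sqrt hh1
        have hs : Real.sqrt h ^ 2 = h := Real.sq_sqrt hh0.le
        have hv2 : v^2 ≤ 1 := CC.sq_le_one hv.1.le hv.2
        have hv4 : v^4 ≤ 1 := by nlinarith [sq_nonneg v, sq_nonneg (v^2)]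
        have hv6 : v^6 ≤ 1 := by nlinarith [sq_nonneg v, sq_nonneg (v^2), sq_nonneg (v^3)]
        have hg0 := CC.gl_nonneg h v
        have hg1 := CC.gl_le_one h v
        have hg2 : (CC.gl h v)^2 ≤ 1 := by nlinarith
        refine CC.comb4 hg0 hg1 ?_ ?_ ?_ ?_
        · refine CC.abs_term (by positivity) ?_
          rw [div_le_iff₀ (by positivity : (0:ℝ) < h)]
          nlinarith
        · refine CC.abs_term (by positivity) ?_
          rw [div_le_iff₀ (by positivity : (0:ℝ) < Real.sqrt h)]
          nlinarith
        · refine CC.abs_term (by positivity) ?_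
          rw [div_le_iff₀ (by positivity : (0:ℝ) < Real.sqrt h)]
          nlinarith
        · exact CC.abs_term (by positivity) (by nlinarith)
      · intro v hv
        have hv2 : v^2 ≤ 1 := CC.sq_le_one hv.1.le hv.2
        have hv4 : v^4 ≤ 1 := by nlinarith [sq_nonneg v, sq_nonneg (v^2)]
        have hv6 : v^6 ≤ 1 := by nlinarith [sq_nonneg v, sq_nonneg (v^2), sq_nonneg (v^3)]
        have hs14 : (0:ℝ) ≤ 1 - v^4 := by linarith
        have t2 : Filter.Tendsto (fun h => l₂*(2*v^2/h)) atTop (𝓝 0) := by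
          apply CC.tendsto_of_bound (|l₂| * 2)
          intro h hh1
          have hh0 : (0:ℝ) < h := by linarith
          have hs1 : 1 ≤ Real.sqrt h := CC.one_le_sqrt hh1
          have hs : Real.sqrt h ^ 2 = h := Real.sq_sqrt hh0.le
          have hq0 : 0 ≤ 2*v^2/h := by positivity
          rw [abs_mul, abs_of_nonneg hq0]
          have hq : 2*v^2/h ≤ 2/Real.sqrt h := by
            rw [div_le_div_iff₀ (by positivity) (by positivity)]
            nlinarith [mul_le_mul_of_nonneg_left hv2 (Real.sqrt_nonneg h)]
          calc |l₂| * (2*v^2/h) ≤ |l₂| * (2/Real.sqrt h) :=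
              mul_le_mul_of_nonneg_left hq (abs_nonneg _)
            _ = |l₂| * 2/Real.sqrt h := by ring
        have t3 : Filter.Tendsto (fun h => l₃*(2*(CC.gl h v)^2/Real.sqrt h)) atTop (𝓝 0) := by
          apply CC.tendsto_of_bound (|l₃| * 2)
          intro h hh1
          have hh0 : (0:ℝ) < h := by linarith
          have hs1 : 1 ≤ Real.sqrt h := CC.one_le_sqrt hh1
          have hg0 := CC.gl_nonneg h v
          have hg1 := CC.gl_le_one h v
          have hg2 : (CC.gl h v)^2 ≤ 1 := by nlinarith
          have hq0 : 0 ≤ 2*(CC.gl h v)^2/Real.sqrt h := by positivity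
          rw [abs_mul, abs_of_nonneg hq0]
          have hq : 2*(CC.gl h v)^2/Real.sqrt h ≤ 2/Real.sqrt h := by
            rw [div_le_div_iff₀ (by positivity) (by positivity)]
            nlinarith
          calc |l₃| * (2*(CC.gl h v)^2/Real.sqrt h) ≤ |l₃| * (2/Real.sqrt h) :=
              mul_le_mul_of_nonneg_left hq (abs_nonneg _)
            _ = |l₃| * 2/Real.sqrt h := by ring
        have t4 : Filter.Tendsto (fun h => l₄*(4*v^4/Real.sqrt h)) atTop (𝓝 0) := by
          apply CC.tendsto_of_bound (|l₄| * 4)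
          intro h hh1
          have hh0 : (0:ℝ) < h := by linarith
          have hs1 : 1 ≤ Real.sqrt h := CC.one_le_sqrt hh1
          have hq0 : 0 ≤ 4*v^4/Real.sqrt h := by positivity
          rw [abs_mul, abs_of_nonneg hq0]
          have hq : 4*v^4/Real.sqrt h ≤ 4/Real.sqrt h := by
            rw [div_le_div_iff₀ (by positivity) (by positivity)]
            nlinarith [Real.sqrt_nonneg h]
          calc |l₄| * (4*v^4/Real.sqrt h) ≤ |l₄| * (4/Real.sqrt h) :=
              mul_le_mul_of_nonneg_left hq (abs_nonneg _)
            _ = |l₄| * 4/Real.sqrt h := by ring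
        have t6 : Filter.Tendsto (fun h : ℝ => l₆*(8*v^6)) atTop (𝓝 (l₆*(8*v^6))) :=
          tendsto_const_nhds
        have prod := (((t2.add t3).add t4).add t6).mul (CC.tendsto_gl v)
        rw [show l₆*(8*(v^6*Real.sqrt (1-v^4)))
          = (0+0+0+l₆*(8*v^6))*Real.sqrt (1-v^4) by ring]
        exact prod
    have e : (∫ v in (-1:ℝ)..1, l₆*(8*(v^6*Real.sqrt (1-v^4)))) = 0 :=
      CC.conclude hvanish hlim
    rw [intervalIntegral.integral_const_mul, intervalIntegral.integral_const_mul] at e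
    rcases mul_eq_zero.mp e with h6 | h8
    · exact h6
    · exact absurd h8 (ne_of_gt (by linarith [CC.posF]))
  subst hl₆
  -- Step 4 : l₄ + 3 l₃ = 0
  have hrel₄ : l₄ + 3*l₃ = 0 := by
    have hvanish : ∀ᶠ h in (atTop : Filter ℝ), (∫ v in (-1:ℝ)..1,
        (l₂*(2*v^2*Real.sqrt h/h) + l₃*(2*(CC.gl h v)^2) + l₄*(4*v^4)) * CC.gl h v) = 0 := by
      filter_upwards [eventually_gt_atTop (0:ℝ)] with h hh
      exact CC.scale_zero (r := h⁻¹) (hT h hh)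
        (fun v => by field_simp [hh.ne']; ring_nf; try simp)
    have hlim : Filter.Tendsto (fun h => ∫ v in (-1:ℝ)..1,
        (l₂*(2*v^2*Real.sqrt h/h) + l₃*(2*(CC.gl h v)^2) + l₄*(4*v^4)) * CC.gl h v)
        (atTop : Filter ℝ)
        (𝓝 (∫ v in (-1:ℝ)..1,
          (2*l₃*((1-v^4)*Real.sqrt (1-v^4)) + 4*l₄*(v^4*Real.sqrt (1-v^4))))) := by
      apply CC.lim_int _ _ _ (|l₂| * 2 + |l₃| * 2 + |l₄| * 4)
      · refine Filter.Eventually.of_forall (fun h => ?_)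
        unfold CC.gl
        fun_prop
      · filter_upwards [eventually_ge_atTop (1:ℝ)] with h hh1
        intro v hv
        have hh0 : (0:ℝ) < h := by linarith
        have hs1 : 1 ≤ Real.sqrt h := CC.one_le_sqrt hh1
        have hs : Real.sqrt h ^ 2 = h := Real.sq_sqrt hh0.le
        have hv2 : v^2 ≤ 1 := CC.sq_le_one hv.1.le hv.2
        have hv4 : v^4 ≤ 1 := by nlinarith [sq_nonneg v, sq_nonneg (v^2)]
        have hg0 := CC.gl_nonneg h v
        have hg1 := CC.gl_le_one h v
        have hg2 : (CC.gl h v)^2 ≤ 1 := by nlinarith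
        refine CC.comb3 hg0 hg1 ?_ ?_ ?_
        · refine CC.abs_term (by positivity) ?_
          rw [div_le_iff₀ (by positivity : (0:ℝ) < h)]
          nlinarith [mul_le_mul_of_nonneg_left hv2 (Real.sqrt_nonneg h)]
        · exact CC.abs_term (by positivity) (by nlinarith)
        · exact CC.abs_term (by positivity) (by nlinarith)
      · intro v hv
        have hv2 : v^2 ≤ 1 := CC.sq_le_one hv.1.le hv.2
        have hv4 : v^4 ≤ 1 := by nlinarith [sq_nonneg v, sq_nonneg (v^2)]
        have hs14 : (0:ℝ) ≤ 1 - v^4 := by linarith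
        have t2 : Filter.Tendsto (fun h => l₂*(2*v^2*Real.sqrt h/h)) atTop (𝓝 0) := by
          apply CC.tendsto_of_bound (|l₂| * 2)
          intro h hh1
          have hh0 : (0:ℝ) < h := by linarith
          have hs1 : 1 ≤ Real.sqrt h := CC.one_le_sqrt hh1
          have hs : Real.sqrt h ^ 2 = h := Real.sq_sqrt hh0.le
          have hq0 : 0 ≤ 2*v^2*Real.sqrt h/h := by positivity
          rw [abs_mul, abs_of_nonneg hq0]
          have hq : 2*v^2*Real.sqrt h/h ≤ 2/Real.sqrt h := by
            rw [div_le_div_iff₀ (by positivity) (by positivity)]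
            nlinarith [mul_le_mul_of_nonneg_left hv2 (mul_self_nonneg (Real.sqrt h))]
          calc |l₂| * (2*v^2*Real.sqrt h/h) ≤ |l₂| * (2/Real.sqrt h) :=
              mul_le_mul_of_nonneg_left hq (abs_nonneg _)
            _ = |l₂| * 2/Real.sqrt h := by ring
        have t3 : Filter.Tendsto (fun h => l₃*(2*(CC.gl h v)^2)) atTop
            (𝓝 (l₃*(2*(1-v^4)))) := by
          have h2 := (((CC.tendsto_gl v).pow 2).const_mul 2).const_mul l₃
          rw [Real.sq_sqrt hs14] at h2
          exact h2
        have t4 : Filter.Tendsto (fun h : ℝ => l₄*(4*v^4)) atTop (𝓝 (l₄*(4*v^4))) :=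
          tendsto_const_nhds
        have prod := ((t2.add t3).add t4).mul (CC.tendsto_gl v)
        rw [show (2*l₃*((1-v^4)*Real.sqrt (1-v^4)) + 4*l₄*(v^4*Real.sqrt (1-v^4)))
          = (0+l₃*(2*(1-v^4))+l₄*(4*v^4))*Real.sqrt (1-v^4) by ring]
        exact prod
    have e : (∫ v in (-1:ℝ)..1,
        (2*l₃*((1-v^4)*Real.sqrt (1-v^4)) + 4*l₄*(v^4*Real.sqrt (1-v^4)))) = 0 :=
      CC.conclude hvanish hlim
    rw [intervalIntegral.integral_add
        ((Continuous.intervalIntegrable (by fun_prop) _ _))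
        ((Continuous.intervalIntegrable (by fun_prop) _ _)),
      intervalIntegral.integral_const_mul, intervalIntegral.integral_const_mul] at e
    have hf2 := CC.ftc2
    rw [intervalIntegral.integral_sub
        ((Continuous.intervalIntegrable (by fun_prop) _ _))
        ((Continuous.intervalIntegrable (by fun_prop) _ _)),
      intervalIntegral.integral_const_mul] at hf2
    have h' : (12*l₃+4*l₄) * (∫ v in (-1:ℝ)..1, v^4*Real.sqrt (1-v^4)) = 0 := by
      linear_combination e - 2*l₃*hf2
    have := (mul_eq_zero.mp h').resolve_right (ne_of_gt CC.posD)
    linarith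
  -- Step 5 : l₂ + 3 l₃ = 0
  have hrel₂ : l₂ + 3*l₃ = 0 := by
    have hvanish : ∀ᶠ h in 𝓝[>] (0:ℝ), (∫ u in (-1:ℝ)..1,
        (l₂*(u^2) + l₃*((CC.g h u)^2) + l₄*(2*h*u^4)) * CC.g h u) = 0 := by
      refine Filter.eventually_of_mem self_mem_nhdsWithin (fun h hh => ?_)
      exact CC.scale_zero (r := (2*h)⁻¹) (hS h hh)
        (fun u => by field_simp [(show (0:ℝ) < h from hh).ne']; ring)
    have hlim : Filter.Tendsto (fun h => ∫ u in (-1:ℝ)..1,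
        (l₂*(u^2) + l₃*((CC.g h u)^2) + l₄*(2*h*u^4)) * CC.g h u) (𝓝[>] (0:ℝ))
        (𝓝 (∫ u in (-1:ℝ)..1,
          (l₂*(u^2*Real.sqrt (1-u^2)) + l₃*((1-u^2)*Real.sqrt (1-u^2))))) := by
      apply CC.lim_int _ _ _ (|l₂| * 1 + |l₃| * 1 + |l₄| * 2)
      · refine Filter.Eventually.of_forall (fun h => ?_)
        unfold CC.g
        fun_prop
      · refine Filter.eventually_of_mem (Ioc_mem_nhdsGT_of_mem (by norm_num :
          (0:ℝ) ∈ Set.Ico (0:ℝ) 1)) (fun h hh => ?_)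
        intro u hu
        obtain ⟨hh0, hh1⟩ := hh
        have hu2 : u^2 ≤ 1 := CC.sq_le_one hu.1.le hu.2
        have hu4 : u^4 ≤ 1 := by nlinarith [sq_nonneg u, sq_nonneg (u^2)]
        have hg0 := CC.g_nonneg h u
        have hg1 := CC.g_le_one hh0.le u
        have hg2 : (CC.g h u)^2 ≤ 1 := by nlinarith
        refine CC.comb3 hg0 hg1 ?_ ?_ ?_
        · exact CC.abs_term (sq_nonneg u) hu2
        · exact CC.abs_term (by positivity) hg2
        · exact CC.abs_term (by positivity)
            (by nlinarith [mul_le_mul hh1 hu4 (by positivity) zero_le_one])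
      · intro u hu
        have hu2 : u^2 ≤ 1 := CC.sq_le_one hu.1.le hu.2
        have h14 : (0:ℝ) ≤ 1 - u^2 := by linarith
        have hc : Continuous (fun h => (l₂*(u^2) + l₃*((CC.g h u)^2) + l₄*(2*h*u^4))
            * CC.g h u) := by
          unfold CC.g
          fun_prop
        have hts := (hc.tendsto 0).mono_left (nhdsWithin_le_nhds (s := Set.Ioi (0:ℝ)))
        convert hts using 2
        unfold CC.g
        rw [show (1 - u^2 - (0:ℝ)*u^4) = 1-u^2 by ring, Real.sq_sqrt h14]
        ring
    have e : (∫ u in (-1:ℝ)..1,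
        (l₂*(u^2*Real.sqrt (1-u^2)) + l₃*((1-u^2)*Real.sqrt (1-u^2)))) = 0 :=
      CC.conclude hvanish hlim
    rw [intervalIntegral.integral_add
        ((Continuous.intervalIntegrable (by fun_prop) _ _))
        ((Continuous.intervalIntegrable (by fun_prop) _ _)),
      intervalIntegral.integral_const_mul, intervalIntegral.integral_const_mul] at e
    have hf1 := CC.ftc1
    rw [intervalIntegral.integral_sub
        ((Continuous.intervalIntegrable (by fun_prop) _ _))
        ((Continuous.intervalIntegrable (by fun_prop) _ _)),
      intervalIntegral.integral_const_mul] at hf1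
    have h' : (l₂+3*l₃) * (∫ u in (-1:ℝ)..1, u^2*Real.sqrt (1-u^2)) = 0 := by
      linear_combination e - l₃*hf1
    have := (mul_eq_zero.mp h').resolve_right (ne_of_gt CC.posB)
    linarith
  exact ⟨rfl, rfl, rfl, hrel₂, hrel₄⟩
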